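/- Consider the dimaze given by the half-grid: the digraph D on vertices {(x, y) ∈ ℤ² : y > 0 and y ≥ x ≥ 0} with grid edges directed upwards and leftwards, and exits B_0 = {(0, y) : y > 0}. Then the diagonal set I = {(x, x) : x > 0} is linkable onto a subset J of B_0 if and only if J is infinite; consequently I has no maximal linkable superset inside I ∪ B_0, and M_L(D, B_0) is not a matroid. -/

import Mathlib

open Set

universe u

variable {V : Type*}

/-- A directed path in the digraph `D`: a nonempty duplicate-free list of vertices
with an edge between consecutive vertices. -/
structure DiPath {V : Type*} (D : V → V → Prop) where
  verts : List V
  ne : verts ≠ []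
  nodup : verts.Nodup
  chain : verts.Chain' D

namespace DiPath

variable {D : V → V → Prop}

/-- The initial vertex of a directed path. -/
def first (p : DiPath D) : V := p.verts.head p.ne

/-- The terminal vertex of a directed path. -/
def last (p : DiPath D) : V := p.verts.getLast p.ne

/-- The set of vertices of a directed path. -/
def vertSet (p : DiPath D) : Set V := {v | v ∈ p.verts}

/-- The set of (directed) edges of a directed path. -/
def edgeSet (p : DiPath D) : Set (V × V) := {e | e ∈ p.verts.zip p.verts.tail}

end DiPath

/-- The set of initial vertices of a collection of paths. -/
def Ini {D : V → V → Prop} (P : Set (DiPath D)) : Set V := {v | ∃ p ∈ P, p.first = v}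

/-- The set of terminal vertices of a collection of paths. -/
def Ter {D : V → V → Prop} (P : Set (DiPath D)) : Set V := {v | ∃ p ∈ P, p.last = v}

/-- All vertices used by a collection of paths. -/
def LinkVerts {D : V → V → Prop} (P : Set (DiPath D)) : Set V := ⋃ p ∈ P, p.vertSet

/-- All edges used by a collection of paths. -/
def LinkEdges {D : V → V → Prop} (P : Set (DiPath D)) : Set (V × V) := ⋃ p ∈ P, p.edgeSet

/-- A linkage in the dimaze `(D, B0)`: a set of pairwise vertex-disjoint directed
paths, each ending in `B0`. -/
def IsLinkage (D : V → V → Prop) (B0 : Set V) (P : Set (DiPath D)) : Prop :=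
  (∀ p ∈ P, p.last ∈ B0) ∧
  (∀ p ∈ P, ∀ q ∈ P, p ≠ q → Disjoint p.vertSet q.vertSet)

/-- `(D, B0)` is a dimaze: every vertex of `B0` has out-degree `0`. -/
def IsDimaze (D : V → V → Prop) (B0 : Set V) : Prop := ∀ b ∈ B0, ∀ v, ¬ D b v

/-- A set of vertices is linkable if it is the set of initial vertices of a linkage. -/
def Linkable (D : V → V → Prop) (B0 : Set V) (I : Set V) : Prop :=
  ∃ P, IsLinkage D B0 P ∧ Ini P = I

/-- A set of vertices is linkable onto `B0` if it is the set of initial vertices of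
a linkage whose terminal vertices are all of `B0`. -/
def LinkableOnto (D : V → V → Prop) (B0 : Set V) (I : Set V) : Prop :=
  ∃ P, IsLinkage D B0 P ∧ Ini P = I ∧ Ter P = B0

/-- `I` is a maximal element (w.r.t. inclusion) of the set system `Ind`. -/
def MaximalIn {α : Type*} (Ind : Set α → Prop) (I : Set α) : Prop :=
  Ind I ∧ ∀ J, Ind J → I ⊆ J → J = I

/-- The maximality axiom (IM). -/
def SatisfiesIM {α : Type*} (Ind : Set α → Prop) : Prop :=
  ∀ I X : Set α, Ind I → I ⊆ X →
    ∃ J, Ind J ∧ I ⊆ J ∧ J ⊆ X ∧ ∀ K, Ind K → K ⊆ X → J ⊆ K → K = J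

/-- `Ind` is the collection of independent sets of a matroid:
axioms (I1), (I2), (I3) and (IM). -/
def IsMatroidIndep {α : Type*} (Ind : Set α → Prop) : Prop :=
  Ind ∅ ∧
  (∀ I J : Set α, I ⊆ J → Ind J → Ind I) ∧
  (∀ I B : Set α, Ind I → ¬ MaximalIn Ind I → MaximalIn Ind B →
    ∃ x ∈ B \ I, Ind (insert x I)) ∧
  SatisfiesIM Ind

/-- The dimaze `(D, B0)` contains an alternating comb: there is an alternating ray
(given by the injective vertex sequence `f` and edge orientations `o`, with
infinitely many vertices of in-degree 2) together with a linkage of all its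
in-degree-2 vertices and its first vertex onto a set of exits contained in `B0`,
by disjoint paths meeting the ray exactly at their initial vertices. -/
def ContainsAltComb (D : V → V → Prop) (B0 : Set V) : Prop :=
  ∃ (f : ℕ → V) (o : ℕ → Bool) (P : Set (DiPath D)),
    Function.Injective f ∧
    (∀ n, if o n then D (f n) (f (n+1)) else D (f (n+1)) (f n)) ∧
    (∀ N, ∃ k ≥ N, o k = true ∧ o (k+1) = false) ∧
    IsLinkage D B0 P ∧
    Ini P = insert (f 0) {v | ∃ k, o k = true ∧ o (k+1) = false ∧ v = f (k+1)} ∧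
    (∀ p ∈ P, ∀ v ∈ p.vertSet, v ∈ Set.range f → v = p.first)
/-- The vertex set of the half-grid: `{(x, y) ∈ ℤ² : y > 0 and y ≥ x ≥ 0}`. -/
abbrev HalfGridV := {p : ℤ × ℤ // 0 < p.2 ∧ p.1 ≤ p.2 ∧ 0 ≤ p.1}

/-- Edges of the half-grid, directed upwards and leftwards (with the outgoing
edges of the exits, the column `x = 0`, removed). -/
def halfGridAdj (a b : HalfGridV) : Prop :=
  0 < a.1.1 ∧ (b.1 = (a.1.1, a.1.2 + 1) ∨ b.1 = (a.1.1 - 1, a.1.2))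

/-- The exits of the half-grid: the column `x = 0`. -/
def halfGridB0 : Set HalfGridV := {p | p.1.1 = 0}

/-- The diagonal `{(x, x) : x > 0}`. -/
def halfGridDiag : Set HalfGridV := {p | p.1.1 = p.1.2 ∧ 0 < p.1.1}

namespace HGaux

def bV (n : ℕ) : HalfGridV := ⟨(0, (n:ℤ)+1), by refine ⟨by omega, by omega, by omega⟩⟩
def dV (k : ℕ) : HalfGridV := ⟨((k:ℤ)+1, (k:ℤ)+1), by refine ⟨by omega, by omega, by omega⟩⟩

lemma bV_inj : Function.Injective bV := by
  intro a b h; simpa [bV, Subtype.ext_iff, Prod.ext_iff] using h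

lemma dV_inj : Function.Injective dV := by
  intro a b h; simp only [dV, Subtype.ext_iff, Prod.ext_iff] at h; omega

lemma bV_mem (n : ℕ) : bV n ∈ halfGridB0 := rfl

lemma dV_mem (k : ℕ) : dV k ∈ halfGridDiag := ⟨rfl, by simp [dV]⟩

lemma mem_B0_iff (v : HalfGridV) : v ∈ halfGridB0 ↔ ∃ n, v = bV n := by
  constructor
  · intro h
    refine ⟨(v.1.2 - 1).toNat, ?_⟩
    have := v.2
    simp only [halfGridB0, mem_setOf_eq] at h
    apply Subtype.ext; apply Prod.ext <;> simp [bV, h] <;> omega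
  · rintro ⟨n, rfl⟩; exact bV_mem n

lemma mem_diag_iff (v : HalfGridV) : v ∈ halfGridDiag ↔ ∃ k, v = dV k := by
  constructor
  · rintro ⟨h1, h2⟩
    refine ⟨(v.1.1 - 1).toNat, ?_⟩
    apply Subtype.ext; apply Prod.ext <;> simp [dV] <;> omega
  · rintro ⟨k, rfl⟩; exact dV_mem k

def gV (m y i : ℕ) : HalfGridV :=
  ⟨(((min (m+1) (y+1-i) : ℕ) : ℤ), ((min (m+1+i) (y+1) : ℕ) : ℤ)), by
    refine ⟨by omega, by omega, by omega⟩⟩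

def pVerts (m y : ℕ) : List HalfGridV := (List.range (y+2)).map (gV m y)

def pPath (m y : ℕ) : DiPath halfGridAdj where
  verts := pVerts m y
  ne := by simp [pVerts]
  nodup := by
    refine List.Nodup.map_on ?_ List.nodup_range
    intro i hi j hj h
    simp only [List.mem_range] at hi hj
    simp only [gV, Subtype.ext_iff, Prod.ext_iff] at h
    omega
  chain := by
    unfold pVerts
    show List.IsChain halfGridAdj _
    rw [List.isChain_map, show y+2 = (y+1)+1 from rfl, List.isChain_range_succ]
    intro i hi
    refine ⟨by simp [gV]; omega, ?_⟩
    simp only [gV, Prod.ext_iff]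
    omega

lemma pVerts_cons (m y : ℕ) :
    pVerts m y = gV m y 0 :: ((List.range (y+1)).map (fun i => gV m y (i+1))) := by
  rw [pVerts, show y+2 = (y+1)+1 from rfl, List.range_succ_eq_map]
  simp [List.map_map, Function.comp_def]

lemma pVerts_concat (m y : ℕ) :
    pVerts m y = ((List.range (y+1)).map (gV m y)) ++ [gV m y (y+1)] := by
  rw [pVerts, show y+2 = (y+1)+1 from rfl, List.range_succ]
  simp

lemma gV_zero (m y : ℕ) (h : m ≤ y) : gV m y 0 = dV m := by
  apply Subtype.ext; apply Prod.ext <;> simp [gV, dV] <;> omega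

lemma gV_last (m y : ℕ) : gV m y (y+1) = bV y := by
  apply Subtype.ext; apply Prod.ext <;> simp [gV, bV] <;> omega

lemma pPath_first (m y : ℕ) (h : m ≤ y) : (pPath m y).first = dV m := by
  rw [DiPath.first]
  simp only [pPath, pVerts_cons, List.head_cons]
  exact gV_zero m y h

lemma pPath_last (m y : ℕ) : (pPath m y).last = bV y := by
  rw [DiPath.last]
  simp only [pPath, pVerts_concat]
  rw [List.getLast_append]
  exact gV_last m y

lemma pPath_mem_vert {m y : ℕ} {v : HalfGridV} (h : v ∈ (pPath m y).vertSet) :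
    ∃ i ≤ y + 1, gV m y i = v := by
  simp only [DiPath.vertSet, pPath, pVerts, mem_setOf_eq, List.mem_map, List.mem_range] at h
  obtain ⟨i, hi, rfl⟩ := h
  exact ⟨i, by omega, rfl⟩

lemma pPath_vert_bound {m y : ℕ} {v : HalfGridV} (h : v ∈ (pPath m y).vertSet) :
    v.1.1 ≤ (m:ℤ)+1 ∧ v.1.2 ≤ (y:ℤ)+1 ∧ (v.1.1 = (m:ℤ)+1 ∨ v.1.2 = (y:ℤ)+1) := by
  obtain ⟨i, hi, rfl⟩ := pPath_mem_vert h
  simp only [gV]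
  omega

lemma pPath_B0 {m y : ℕ} {v : HalfGridV} (h : v ∈ (pPath m y).vertSet)
    (hb : v ∈ halfGridB0) : v = (pPath m y).last := by
  obtain ⟨i, hi, rfl⟩ := pPath_mem_vert h
  simp only [halfGridB0, mem_setOf_eq, gV] at hb
  have : i = y + 1 := by omega
  rw [this, gV_last, pPath_last]

lemma pPath_disjoint {m y m' y' : ℕ} (hm : m < m') (hy : y < y') :
    Disjoint (pPath m y).vertSet (pPath m' y').vertSet := by
  rw [Set.disjoint_left]
  intro v hv hv'
  have h1 := pPath_vert_bound hv
  have h2 := pPath_vert_bound hv'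
  omega

/-- Main construction: for strictly monotone `Y` with `m ≤ Y m`, the paths
`pPath m (Y m)` form a linkage from the diagonal onto `{bV (Y m)}`. -/
lemma construction (Y : ℕ → ℕ) (hmono : StrictMono Y) (hle : ∀ m, m ≤ Y m) :
    ∃ P : Set (DiPath halfGridAdj), IsLinkage halfGridAdj halfGridB0 P ∧
      Ini P = halfGridDiag ∧ Ter P = bV '' (Set.range Y) ∧
      ∀ p ∈ P, ∀ v ∈ p.vertSet, v ∈ halfGridB0 → v = p.last := by
  refine ⟨Set.range (fun m => pPath m (Y m)), ⟨?_, ?_⟩, ?_, ?_, ?_⟩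
  · rintro p ⟨m, rfl⟩
    rw [pPath_last]; exact bV_mem _
  · rintro p ⟨m, rfl⟩ q ⟨m', rfl⟩ hne
    rcases lt_trichotomy m m' with h | h | h
    · exact pPath_disjoint h (hmono h)
    · exact absurd (by rw [h]) hne
    · exact (pPath_disjoint h (hmono h)).symm
  · ext v
    simp only [Ini, mem_setOf_eq, mem_diag_iff]
    constructor
    · rintro ⟨p, ⟨m, rfl⟩, rfl⟩
      exact ⟨m, pPath_first m (Y m) (hle m)⟩
    · rintro ⟨k, rfl⟩
      exact ⟨pPath k (Y k), ⟨k, rfl⟩, pPath_first k (Y k) (hle k)⟩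
  · ext v
    simp only [Ter, mem_setOf_eq, Set.mem_image, Set.mem_range]
    constructor
    · rintro ⟨p, ⟨m, rfl⟩, rfl⟩
      exact ⟨Y m, ⟨m, rfl⟩, (pPath_last m (Y m)).symm⟩
    · rintro ⟨n, ⟨m, rfl⟩, rfl⟩
      exact ⟨pPath m (Y m), ⟨m, rfl⟩, pPath_last m (Y m)⟩
  · rintro p ⟨m, rfl⟩ v hv hb
    exact pPath_B0 hv hb


lemma B0_infinite : halfGridB0.Infinite :=
  Set.infinite_of_injective_forall_mem bV_inj bV_mem

lemma linkable_onto_of_infinite {J : Set HalfGridV} (hJB : J ⊆ halfGridB0)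
    (hJ : J.Infinite) :
    ∃ P, IsLinkage halfGridAdj halfGridB0 P ∧ Ini P = halfGridDiag ∧ Ter P = J ∧
      ∀ p ∈ P, ∀ v ∈ p.vertSet, v ∈ halfGridB0 → v = p.last := by
  set S : Set ℕ := {n | bV n ∈ J} with hS
  have hJS : J = bV '' S := by
    ext v; constructor
    · intro hv
      obtain ⟨n, rfl⟩ := (mem_B0_iff v).1 (hJB hv)
      exact ⟨n, hv, rfl⟩
    · rintro ⟨n, hn, rfl⟩; exact hn
  have hSinf : S.Infinite := by
    intro hfin
    exact hJ (hJS ▸ hfin.image _)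
  haveI : Infinite S := hSinf.to_subtype
  set e := Nat.Subtype.orderIsoOfNat S with he
  set Y : ℕ → ℕ := fun m => (e m : ℕ) with hY
  have hmono : StrictMono Y := fun a b h => Subtype.coe_lt_coe.2 (e.strictMono h)
  have hle : ∀ m, m ≤ Y m := fun m => hmono.le_apply
  obtain ⟨P, h1, h2, h3, h4⟩ := construction Y hmono hle
  refine ⟨P, h1, h2, ?_, h4⟩
  have hrange : Set.range Y = S := by
    ext n; constructor
    · rintro ⟨m, rfl⟩; exact (e m).2
    · intro hn
      obtain ⟨m, hm⟩ := e.surjective ⟨n, hn⟩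
      exact ⟨m, congrArg Subtype.val hm⟩
  rw [h3, hrange, hJS]

lemma last_mem_vertSet {V : Type*} {D : V → V → Prop} (p : DiPath D) :
    p.last ∈ p.vertSet := List.getLast_mem p.ne

lemma first_mem_vertSet {V : Type*} {D : V → V → Prop} (p : DiPath D) :
    p.first ∈ p.vertSet := List.head_mem p.ne

lemma exists_inj_into_ter {P : Set (DiPath halfGridAdj)}
    (hdisj : ∀ p ∈ P, ∀ q ∈ P, p ≠ q → Disjoint p.vertSet q.vertSet)
    {M : Set HalfGridV} (hI : Ini P = M) (hdM : halfGridDiag ⊆ M) :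
    ∃ f : ℕ → HalfGridV, Function.Injective f ∧
      ∀ m, ∃ p ∈ P, p.first = dV m ∧ p.last = f m := by
  have h : ∀ m : ℕ, ∃ p ∈ P, p.first = dV m := by
    intro m
    have : dV m ∈ Ini P := hI ▸ hdM (dV_mem m)
    exact this
  choose g hg1 hg2 using h
  refine ⟨fun m => (g m).last, ?_, fun m => ⟨g m, hg1 m, hg2 m, rfl⟩⟩
  intro a b hab
  have hgab : g a = g b := by
    by_contra hne
    have hab' : (g a).last = (g b).last := hab
    refine Set.disjoint_left.1 (hdisj _ (hg1 a) _ (hg1 b) hne)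
      (last_mem_vertSet (g a)) ?_
    rw [hab']
    exact last_mem_vertSet (g b)
  exact dV_inj ((hg2 a).symm.trans (hgab ▸ hg2 b))

def sPath (b : HalfGridV) : DiPath halfGridAdj := ⟨[b], by simp, by simp, List.isChain_singleton _⟩

lemma sPath_first (b : HalfGridV) : (sPath b).first = b := rfl
lemma sPath_last (b : HalfGridV) : (sPath b).last = b := rfl
lemma sPath_vertSet (b : HalfGridV) : (sPath b).vertSet = {b} := by
  ext v; simp [sPath, DiPath.vertSet]
lemma sPath_inj : Function.Injective sPath := by
  intro a b h
  have := congrArg DiPath.verts h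
  simpa [sPath] using this

lemma last_eq_first_of_first_B0 (p : DiPath halfGridAdj) (h : p.first ∈ halfGridB0) :
    p.last = p.first := by
  obtain ⟨a, t, hv⟩ : ∃ a t, p.verts = a :: t := by
    cases hp : p.verts with
    | nil => exact absurd hp p.ne
    | cons a t => exact ⟨a, t, rfl⟩
  have hfa : p.first = a := by simp [DiPath.first, hv]
  cases t with
  | nil => simp [DiPath.last, hfa, hv]
  | cons v t' =>
    exfalso
    have hc : List.IsChain halfGridAdj p.verts := p.chain
    rw [hv, List.isChain_cons_cons] at hc
    have hadj : halfGridAdj a v := hc.1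
    rw [hfa] at h
    simp only [halfGridB0, mem_setOf_eq] at h
    have := hadj.1
    omega

lemma Ini_union {V : Type*} {D : V → V → Prop} (A B : Set (DiPath D)) :
    Ini (A ∪ B) = Ini A ∪ Ini B := by
  ext v
  simp only [Ini, mem_setOf_eq, Set.mem_union]
  constructor
  · rintro ⟨p, hp | hp, rfl⟩
    · exact Or.inl ⟨p, hp, rfl⟩
    · exact Or.inr ⟨p, hp, rfl⟩
  · rintro (⟨p, hp, rfl⟩ | ⟨p, hp, rfl⟩)
    · exact ⟨p, Or.inl hp, rfl⟩
    · exact ⟨p, Or.inr hp, rfl⟩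

lemma Ini_sPath_image (C : Set HalfGridV) : Ini (sPath '' C) = C := by
  ext v
  simp only [Ini, mem_setOf_eq]
  constructor
  · rintro ⟨p, ⟨c, hc, rfl⟩, rfl⟩; exact hc
  · intro hv; exact ⟨sPath v, ⟨v, hv, rfl⟩, rfl⟩

lemma ter_mem {V : Type*} {D : V → V → Prop} {P : Set (DiPath D)} {p : DiPath D}
    (hp : p ∈ P) : p.last ∈ Ter P := ⟨p, hp, rfl⟩

lemma no_maximal :
    ¬ ∃ M : Set HalfGridV, halfGridDiag ⊆ M ∧ M ⊆ halfGridDiag ∪ halfGridB0 ∧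
      Linkable halfGridAdj halfGridB0 M ∧
      ∀ K, Linkable halfGridAdj halfGridB0 K → K ⊆ halfGridDiag ∪ halfGridB0 →
        M ⊆ K → K = M := by
  rintro ⟨M, hdM, hMsub, ⟨P, hP, hIni⟩, hmax⟩
  obtain ⟨f, hfinj, hf⟩ := exists_inj_into_ter hP.2 hIni hdM
  have hfmem : ∀ m, f m ∈ halfGridB0 \ M := by
    intro m
    obtain ⟨p, hpP, hpf, hpl⟩ := hf m
    have hfB : f m ∈ halfGridB0 := hpl ▸ hP.1 p hpP
    refine ⟨hfB, fun hfM => ?_⟩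
    have hIniM : f m ∈ Ini P := by rw [hIni]; exact hfM
    obtain ⟨q, hqP, hqf⟩ := hIniM
    have hpq : p ≠ q := by
      intro h
      rw [h, hqf] at hpf
      rw [hpf] at hfB
      simp only [halfGridB0, mem_setOf_eq, dV] at hfB
      omega
    exact Set.disjoint_left.1 (hP.2 p hpP q hqP hpq)
      (hpl ▸ last_mem_vertSet p) (hqf ▸ first_mem_vertSet q)
  have hBMinf : (halfGridB0 \ M).Infinite :=
    Set.infinite_of_injective_forall_mem hfinj hfmem
  obtain ⟨b, hb⟩ := hBMinf.nonempty
  have hTinf : ((halfGridB0 \ M) \ {b}).Infinite :=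
    hBMinf.diff (Set.finite_singleton b)
  obtain ⟨P', hL', hIni', hTer', hB0'⟩ :=
    linkable_onto_of_infinite (fun x hx => hx.1.1) hTinf
  set C : Set HalfGridV := (M ∩ halfGridB0) ∪ {b} with hC
  have hCB : C ⊆ halfGridB0 := by
    rintro c (⟨_, h⟩ | h)
    · exact h
    · rw [h]; exact hb.1
  set Q := P' ∪ (sPath '' C) with hQ
  have key : ∀ p ∈ P', ∀ c ∈ C, Disjoint p.vertSet (sPath c).vertSet := by
    intro p hp c hc
    rw [sPath_vertSet, Set.disjoint_singleton_right]
    intro hcp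
    have hcl : c = p.last := hB0' p hp c hcp (hCB hc)
    have hlT : p.last ∈ (halfGridB0 \ M) \ {b} := by
      rw [← hTer']; exact ter_mem hp
    rw [← hcl] at hlT
    rcases hc with ⟨hcM, _⟩ | hcb
    · exact hlT.1.2 hcM
    · exact hlT.2 hcb
  have hQL : IsLinkage halfGridAdj halfGridB0 Q := by
    constructor
    · rintro p (hp | ⟨c, hc, rfl⟩)
      · exact hL'.1 p hp
      · exact hCB hc
    · rintro p (hp | ⟨c, hc, rfl⟩) q (hq | ⟨c', hc', rfl⟩) hne
      · exact hL'.2 p hp q hq hne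
      · exact key p hp c' hc'
      · exact (key q hq c hc).symm
      · rw [sPath_vertSet, sPath_vertSet, Set.disjoint_singleton_left,
          Set.mem_singleton_iff]
        exact fun h => hne (congrArg sPath h)
  have hQI : Ini Q = M ∪ {b} := by
    rw [hQ, Ini_union, hIni', Ini_sPath_image, hC]
    ext v
    simp only [Set.mem_union, Set.mem_inter_iff, Set.mem_singleton_iff]
    constructor
    · rintro (hv | ⟨hv, _⟩ | hv)
      · exact Or.inl (hdM hv)
      · exact Or.inl hv
      · exact Or.inr hv
    · rintro (hv | hv)
      · rcases hMsub hv with h | h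
        · exact Or.inl h
        · exact Or.inr (Or.inl ⟨hv, h⟩)
      · exact Or.inr (Or.inr hv)
  have hKsub : M ∪ {b} ⊆ halfGridDiag ∪ halfGridB0 := by
    rintro v (hv | hv)
    · exact hMsub hv
    · exact Or.inr (hv ▸ hb.1)
  have heq := hmax (M ∪ {b}) ⟨Q, hQL, hQI⟩ hKsub Set.subset_union_left
  apply hb.2
  rw [← heq]
  exact Or.inr rfl

end HGaux
/-- In the half-grid, the diagonal is linkable onto `J ⊆ B0` iff `J` is infinite;
consequently the diagonal has no maximal linkable superset inside `I ∪ B0`, and the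
linkability system is not a matroid. -/
theorem halfGrid_not_matroid :
    (∀ J ⊆ halfGridB0,
      ((∃ P, IsLinkage halfGridAdj halfGridB0 P ∧ Ini P = halfGridDiag ∧ Ter P = J) ↔
        J.Infinite)) ∧
    (¬ ∃ M : Set HalfGridV, halfGridDiag ⊆ M ∧ M ⊆ halfGridDiag ∪ halfGridB0 ∧
      Linkable halfGridAdj halfGridB0 M ∧
      ∀ K, Linkable halfGridAdj halfGridB0 K → K ⊆ halfGridDiag ∪ halfGridB0 →
        M ⊆ K → K = M) ∧
    ¬ IsMatroidIndep (Linkable halfGridAdj halfGridB0) := by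
  have part1 : ∀ J ⊆ halfGridB0,
      ((∃ P, IsLinkage halfGridAdj halfGridB0 P ∧ Ini P = halfGridDiag ∧ Ter P = J) ↔
        J.Infinite) := by
    intro J hJB
    constructor
    · rintro ⟨P, hP, hIni, hTer⟩
      obtain ⟨f, hfinj, hf⟩ := HGaux.exists_inj_into_ter hP.2 hIni subset_rfl
      refine Set.infinite_of_injective_forall_mem hfinj (fun m => ?_)
      obtain ⟨p, hpP, _, hpl⟩ := hf m
      rw [← hTer]
      exact ⟨p, hpP, hpl⟩
    · intro hJ
      obtain ⟨P, h1, h2, h3, _⟩ := HGaux.linkable_onto_of_infinite hJB hJ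
      exact ⟨P, h1, h2, h3⟩
  refine ⟨part1, HGaux.no_maximal, ?_⟩
  rintro ⟨_, _, _, hIM⟩
  have hdiag : Linkable halfGridAdj halfGridB0 halfGridDiag := by
    obtain ⟨P, h1, h2, _⟩ :=
      HGaux.linkable_onto_of_infinite (subset_refl halfGridB0) HGaux.B0_infinite
    exact ⟨P, h1, h2⟩
  obtain ⟨N, hNind, hdN, hNsub, hNmax⟩ :=
    hIM halfGridDiag (halfGridDiag ∪ halfGridB0) hdiag Set.subset_union_left
  exact HGaux.no_maximal ⟨N, hdN, hNsub, hNind, hNmax⟩
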